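/- arXiv:2601.02929 — 2 statements merged into one kernel-verified Lean document; each statement's English description precedes it below -/
import Mathlib

section
/- Let r ∈ [0, 1), set X = (r, 0) ∈ ℝ², and let P(r) = (2π)^(−3) ∫_{[0,2π]³} 𝟙[X ∈ convexHull ℝ {A(α), A(β), A(γ)}] d(α,β,γ) with A(θ) = (cos θ, sin θ). Define cross(P, Q, Y) = (Q − P)₁·(Y − P)₂ − (Q − P)₂·(Y − P)₁ and R(Y, →PQ) = 1 if cross(P, Q, Y) ≤ 0, −1 otherwise. Then P(r) = 1/4 − (3/4) · (1/(2π)) ∫₀^{2π} ( (1/(2π)) ∫₀^{2π} R(A(α), →X A(θ)) dα )² dθ. -/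
open Real
open scoped Classical

/-- The point `(cos θ, sin θ)` on the unit circle in `ℝ²`. -/
noncomputable def circlePt (θ : ℝ) : EuclideanSpace ℝ (Fin 2) := WithLp.toLp 2 ![Real.cos θ, Real.sin θ]

/-- The point `(x, y)` in `ℝ²`. -/
noncomputable def pt2 (x y : ℝ) : EuclideanSpace ℝ (Fin 2) := WithLp.toLp 2 ![x, y]

/-- The cross product `(Q − P)₁·(Y − P)₂ − (Q − P)₂·(Y − P)₁` detecting on which side of the
directed line from `P` to `Q` the point `Y` lies. -/
noncomputable def cross2 (P Q Y : EuclideanSpace ℝ (Fin 2)) : ℝ :=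
  (Q - P) 0 * (Y - P) 1 - (Q - P) 1 * (Y - P) 0

/-- `R(Y, →PQ)`: equals `1` if `Y` is to the right of or on the directed line from `P` to `Q`
(`cross2 P Q Y ≤ 0`), and `-1` otherwise. -/
noncomputable def Rside (Y P Q : EuclideanSpace ℝ (Fin 2)) : ℝ :=
  if cross2 P Q Y ≤ 0 then 1 else -1

section Aux

open MeasureTheory

lemma mem_hull_triple {A B C X : EuclideanSpace ℝ (Fin 2)} :
    X ∈ convexHull ℝ ({A, B, C} : Set (EuclideanSpace ℝ (Fin 2))) ↔
    ∃ a b c : ℝ, 0 ≤ a ∧ 0 ≤ b ∧ 0 ≤ c ∧ a + b + c = 1 ∧ a • A + b • B + c • C = X := by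
  rw [show ({A, B, C} : Set (EuclideanSpace ℝ (Fin 2))) = insert A {B, C} by rfl,
    convexHull_insert ⟨B, by simp⟩, convexHull_pair]
  constructor
  · intro h
    rw [mem_convexJoin] at h
    obtain ⟨A', hA', z, hz, hXz⟩ := h
    rw [Set.mem_singleton_iff] at hA'
    subst hA'
    rw [segment_eq_image₂] at hz hXz
    obtain ⟨⟨b', c'⟩, ⟨hb', hc', hbc'⟩, rfl⟩ := hz
    obtain ⟨⟨t, s⟩, ⟨ht, hs, hts⟩, rfl⟩ := hXz
    refine ⟨t, s * b', s * c', ht, by positivity, by positivity, by nlinarith, ?_⟩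
    simp only [smul_add, smul_smul, add_assoc]
  · rintro ⟨a, b, c, ha, hb, hc, habc, rfl⟩
    rw [mem_convexJoin]
    refine ⟨A, Set.mem_singleton _, ?_⟩
    by_cases hbc : b + c = 0
    · have hb0 : b = 0 := by linarith
      have hc0 : c = 0 := by linarith
      refine ⟨B, ?_, ?_⟩
      · rw [segment_eq_image₂]; exact ⟨(1, 0), ⟨by norm_num, by norm_num, by norm_num⟩, by simp⟩
      · rw [segment_eq_image₂]
        refine ⟨(a, 0), ⟨ha, le_refl 0, by simp; linarith⟩, by simp [hb0, hc0]⟩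
    · have hbcpos : 0 < b + c := lt_of_le_of_ne (by linarith) (Ne.symm hbc)
      refine ⟨(b / (b + c)) • B + (c / (b + c)) • C, ?_, ?_⟩
      · rw [segment_eq_image₂]
        exact ⟨(b / (b+c), c / (b+c)), ⟨by positivity, by positivity, by field_simp⟩, rfl⟩
      · rw [segment_eq_image₂]
        refine ⟨(a, b + c), ⟨ha, le_of_lt hbcpos, by simp; linarith⟩, ?_⟩
        show a • A + (b + c) • ((b / (b + c)) • B + (c / (b + c)) • C) = _
        rw [smul_add, smul_smul, smul_smul,
          show (b+c) * (b/(b+c)) = b by field_simp, show (b+c) * (c/(b+c)) = c by field_simp, ← add_assoc]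

lemma hull_iff_signs {A B C X : EuclideanSpace ℝ (Fin 2)}
    (h1 : cross2 X B C ≠ 0) (h2 : cross2 X C A ≠ 0) (h3 : cross2 X A B ≠ 0) :
    X ∈ convexHull ℝ ({A, B, C} : Set (EuclideanSpace ℝ (Fin 2))) ↔
    ((0 < cross2 X B C ∧ 0 < cross2 X C A ∧ 0 < cross2 X A B) ∨
     (cross2 X B C < 0 ∧ cross2 X C A < 0 ∧ cross2 X A B < 0)) := by
  set c1 := cross2 X B C with hc1def
  set c2 := cross2 X C A with hc2def
  set c3 := cross2 X A B with hc3def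
  have hD : cross2 A B C = c1 + c2 + c3 := by
    simp only [hc1def, hc2def, hc3def, cross2, PiLp.sub_apply]; ring
  constructor
  · rw [mem_hull_triple]
    rintro ⟨a, b, c, ha, hb, hc, habc, hX⟩
    have e0 : X 0 = a * A 0 + b * B 0 + c * C 0 := by
      rw [← hX]; simp [PiLp.add_apply, PiLp.smul_apply]
    have e1 : X 1 = a * A 1 + b * B 1 + c * C 1 := by
      rw [← hX]; simp [PiLp.add_apply, PiLp.smul_apply]
    have hce1 : c1 = a * cross2 A B C := by
      simp only [hc1def, cross2, PiLp.sub_apply]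
      rw [e0, e1, show a = 1 - b - c by linarith]; ring
    have hce2 : c2 = b * cross2 A B C := by
      simp only [hc2def, cross2, PiLp.sub_apply]
      rw [e0, e1, show b = 1 - a - c by linarith]; ring
    have hce3 : c3 = c * cross2 A B C := by
      simp only [hc3def, cross2, PiLp.sub_apply]
      rw [e0, e1, show c = 1 - a - b by linarith]; ring
    have hDne : cross2 A B C ≠ 0 := fun h => h1 (by rw [hce1, h, mul_zero])
    have hapos : 0 < a := lt_of_le_of_ne ha (by rintro rfl; exact h1 (by rw [hce1, zero_mul]))
    have hbpos : 0 < b := lt_of_le_of_ne hb (by rintro rfl; exact h2 (by rw [hce2, zero_mul]))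
    have hcpos : 0 < c := lt_of_le_of_ne hc (by rintro rfl; exact h3 (by rw [hce3, zero_mul]))
    rcases hDne.lt_or_gt with hDlt | hDgt
    · right
      exact ⟨by rw [hce1]; exact mul_neg_of_pos_of_neg hapos hDlt,
             by rw [hce2]; exact mul_neg_of_pos_of_neg hbpos hDlt,
             by rw [hce3]; exact mul_neg_of_pos_of_neg hcpos hDlt⟩
    · left
      exact ⟨by rw [hce1]; exact mul_pos hapos hDgt,
             by rw [hce2]; exact mul_pos hbpos hDgt,
             by rw [hce3]; exact mul_pos hcpos hDgt⟩
  · intro hsigns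
    set D := c1 + c2 + c3 with hDdef
    have hfrac : 0 < c1 / D ∧ 0 < c2 / D ∧ 0 < c3 / D := by
      rcases hsigns with ⟨p1, p2, p3⟩ | ⟨n1, n2, n3⟩
      · have : 0 < D := by simp only [hDdef]; linarith
        exact ⟨div_pos p1 this, div_pos p2 this, div_pos p3 this⟩
      · have hDneg : D < 0 := by simp only [hDdef]; linarith
        exact ⟨div_pos_of_neg_of_neg n1 hDneg, div_pos_of_neg_of_neg n2 hDneg,
               div_pos_of_neg_of_neg n3 hDneg⟩
    have hDne : D ≠ 0 := by
      rcases hsigns with ⟨p1, p2, p3⟩ | ⟨n1, n2, n3⟩ <;> simp only [hDdef] <;>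
        intro h <;> linarith
    rw [mem_hull_triple]
    refine ⟨c1 / D, c2 / D, c3 / D, le_of_lt hfrac.1, le_of_lt hfrac.2.1, le_of_lt hfrac.2.2,
      by field_simp; exact hDdef.symm, ?_⟩
    ext i
    have expand : ((c1/D) • A + (c2/D) • B + (c3/D) • C) i
        = (c1 * A i + c2 * B i + c3 * C i) / D := by
      simp [PiLp.add_apply, PiLp.smul_apply]; ring
    rw [expand, div_eq_iff hDne]
    fin_cases i <;>
      · simp only [Fin.mk_zero, Fin.mk_one, hDdef, hc1def, hc2def, hc3def, cross2, PiLp.sub_apply]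
        ring


lemma countable_cos_sin (u v : ℝ) (huv : u^2 + v^2 = 1) :
    Set.Countable {x : ℝ | Real.cos x = u ∧ Real.sin x = v} := by
  set S := {x : ℝ | Real.cos x = u ∧ Real.sin x = v} with hS
  rcases Set.eq_empty_or_nonempty S with h | ⟨x₀, hx₀⟩
  · rw [h]; exact Set.countable_empty
  · apply Set.Countable.mono (_ : S ⊆ Set.range (fun k : ℤ => x₀ + k * (2*π)))
    · exact Set.countable_range _
    · intro x hx
      have hcos : Real.cos (x - x₀) = 1 := by
        rw [Real.cos_sub, hx.1, hx.2, hx₀.1, hx₀.2]; nlinarith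
      obtain ⟨n, hn⟩ := (Real.cos_eq_one_iff _).mp hcos
      exact ⟨n, by push_cast; linarith⟩

lemma countable_trig_line (a b d : ℝ) (ha : a ≠ 0) :
    Set.Countable {x : ℝ | a * Real.sin x + b * Real.cos x = d} := by
  set S := {x : ℝ | a * Real.sin x + b * Real.cos x = d} with hSdef
  rcases Set.eq_empty_or_nonempty S with h | ⟨x₀, hx₀⟩
  · rw [h]; exact Set.countable_empty
  set q := a^2 + b^2 with hq
  have hqpos : 0 < q := by positivity
  have hd2 : d^2 ≤ q := by
    have h0 : a * Real.sin x₀ + b * Real.cos x₀ = d := hx₀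
    have hpy : Real.sin x₀ ^2 + Real.cos x₀ ^2 = 1 := Real.sin_sq_add_cos_sq x₀
    have hdd : d^2 = (a * Real.sin x₀ + b * Real.cos x₀)^2 := by rw [h0]
    rw [hq, hdd]
    nlinarith [sq_nonneg (a * Real.cos x₀ - b * Real.sin x₀), hpy]
  set s := Real.sqrt (q - d^2) with hs
  have hs2 : s^2 = q - d^2 := Real.sq_sqrt (by linarith)
  set u₁ := (b*d + a*s)/q with hu₁
  set u₂ := (b*d - a*s)/q with hu₂
  set v₁ := (d - b*u₁)/a with hv₁
  set v₂ := (d - b*u₂)/a with hv₂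
  have oncircle : ∀ u' : ℝ, (q*u' - b*d)^2 = a^2*s^2 → u'^2 + ((d - b*u')/a)^2 = 1 := by
    intro u' h
    have : q * (a^2*u'^2 + (b*u' - d)^2 - a^2) = (q*u' - b*d)^2 - a^2*(q - d^2) := by
      simp only [hq]; ring
    have h2 : a^2*u'^2 + (b*u' - d)^2 - a^2 = 0 := by
      have := this
      rw [h, hs2] at this
      have hz : q * (a^2*u'^2 + (b*u' - d)^2 - a^2) = 0 := by linarith
      exact (mul_eq_zero.mp hz).resolve_left (ne_of_gt hqpos)
    field_simp
    nlinarith [h2]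
  have hc1 : u₁^2 + v₁^2 = 1 := by
    apply oncircle; rw [hu₁]; field_simp; ring_nf
  have hc2 : u₂^2 + v₂^2 = 1 := by
    apply oncircle; rw [hu₂]; field_simp; ring_nf
  apply Set.Countable.mono
    (_ : S ⊆ {x : ℝ | Real.cos x = u₁ ∧ Real.sin x = v₁} ∪
           {x : ℝ | Real.cos x = u₂ ∧ Real.sin x = v₂})
  · exact Set.Countable.union (countable_cos_sin _ _ hc1) (countable_cos_sin _ _ hc2)
  · intro x hx
    have hline : a * Real.sin x + b * Real.cos x = d := hx
    have hpy : Real.sin x ^2 + Real.cos x ^2 = 1 := Real.sin_sq_add_cos_sq x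
    set u := Real.cos x with hu
    set v := Real.sin x with hv
    have hveq : v = (d - b*u)/a := by field_simp; linarith
    have hquad : a^2*u^2 + (b*u - d)^2 - a^2 = 0 := by
      have : (b*u - d)^2 = a^2 * v^2 := by rw [hveq]; field_simp; ring
      nlinarith [this]
    have hfac : (q*u - b*d)^2 - a^2*s^2 = 0 := by
      have expand : q * (a^2*u^2 + (b*u - d)^2 - a^2) = (q*u - b*d)^2 - a^2*(q - d^2) := by
        simp only [hq]; ring
      rw [hquad, mul_zero] at expand
      rw [hs2]; linarith
    have : (u - u₁) * (u - u₂) = 0 := by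
      have hqne : q ≠ 0 := ne_of_gt hqpos
      have : q^2 * ((u - u₁) * (u - u₂)) = (q*u - b*d)^2 - a^2*s^2 := by
        rw [hu₁, hu₂]; field_simp; ring
      have hz : q^2 * ((u - u₁) * (u - u₂)) = 0 := by rw [this, hfac]
      exact (mul_eq_zero.mp hz).resolve_left (by positivity)
    rcases mul_eq_zero.mp this with h | h
    · left
      exact ⟨by rw [← hu]; linarith,
             by rw [← hv, hveq, show u = u₁ by linarith, ← hv₁]⟩
    · right
      exact ⟨by rw [← hu]; linarith,
             by rw [← hv, hveq, show u = u₂ by linarith, ← hv₂]⟩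

lemma null_trig_line (a b d : ℝ) (hab : a ≠ 0 ∨ b ≠ 0) :
    volume {x : ℝ | a * Real.sin x + b * Real.cos x = d} = 0 := by
  rcases eq_or_ne a 0 with rfl | ha
  · have hb : b ≠ 0 := hab.resolve_left (fun h => h rfl)
    have : {x : ℝ | 0 * Real.sin x + b * Real.cos x = d}
        = (fun y => y - π/2) '' {y : ℝ | b * Real.sin y + 0 * Real.cos y = d} := by
      ext x
      simp only [Set.mem_setOf_eq, Set.mem_image, zero_mul, zero_add, add_zero, mul_comm]
      constructor
      · intro h
        exact ⟨x + π/2, by rw [Real.sin_add_pi_div_two]; exact h, by ring⟩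
      · rintro ⟨y, hy, rfl⟩
        rw [show y - π/2 = -(π/2 - y) by ring, Real.cos_neg, Real.cos_pi_div_two_sub]
        exact hy
    rw [this]
    exact Set.Countable.measure_zero
      ((countable_trig_line b 0 d hb).image _) _
  · exact Set.Countable.measure_zero (countable_trig_line a b d ha) _

noncomputable section TP

/-- The cross product of `X`, `A(θ)`, `A(α)` as an explicit trigonometric expression. -/
def cfun (r θ α : ℝ) : ℝ := (Real.cos θ - r) * Real.sin α - Real.sin θ * (Real.cos α - r)

lemma cross2_eq (r θ α : ℝ) : cross2 (pt2 r 0) (circlePt θ) (circlePt α) = cfun r θ α := by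
  simp only [cross2, pt2, circlePt, cfun, PiLp.sub_apply, PiLp.toLp_apply, Matrix.cons_val_zero,
    Matrix.cons_val_one, Matrix.head_cons]
  ring

lemma cfun_neg (r x y : ℝ) : cfun r x y = - cfun r y x := by unfold cfun; ring

/-- The `±1`-valued side function. -/
def g (r θ α : ℝ) : ℝ := if cfun r θ α ≤ 0 then 1 else -1

lemma Rside_eq (r θ α : ℝ) : Rside (circlePt α) (pt2 r 0) (circlePt θ) = g r θ α := by
  unfold Rside g
  rw [cross2_eq]

lemma g_abs (r θ α : ℝ) : |g r θ α| ≤ 1 := by unfold g; split_ifs <;> norm_num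

lemma g_antisym {r x y : ℝ} (h : cfun r x y ≠ 0) : g r y x = - g r x y := by
  unfold g
  rcases h.lt_or_gt with hlt | hlt
  · rw [if_neg (by rw [cfun_neg r y x]; push_neg; linarith), if_pos hlt.le]
    try norm_num
  · rw [if_pos (by rw [cfun_neg r y x]; linarith), if_neg (not_le.mpr hlt)]
    try norm_num

lemma meas_cfun2 (r : ℝ) : Measurable (fun p : ℝ × ℝ => cfun r p.1 p.2) := by
  unfold cfun; fun_prop

lemma meas_g2 (r : ℝ) : Measurable (fun p : ℝ × ℝ => g r p.1 p.2) := by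
  unfold g
  exact Measurable.ite (measurableSet_le (meas_cfun2 r) measurable_const)
    measurable_const measurable_const

lemma meas_g_left (r θ : ℝ) : Measurable (fun α => g r θ α) :=
  Measurable.of_uncurry_left (show Measurable (Function.uncurry (g r)) from meas_g2 r)

lemma meas_g_right (r α : ℝ) : Measurable (fun γ => g r γ α) :=
  Measurable.of_uncurry_right (show Measurable (Function.uncurry (g r)) from meas_g2 r)

/-- The basic interval `(0, 2π]`. -/
def II : Set ℝ := Set.Ioc 0 (2*π)

instance : IsFiniteMeasure (volume.restrict II) := by
  constructor
  rw [Measure.restrict_apply_univ, II, Real.volume_Ioc]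
  exact ENNReal.ofReal_lt_top

lemma meas_univ_II : ((volume.restrict II) Set.univ).toReal = 2*π := by
  rw [Measure.restrict_apply_univ, II, Real.volume_Ioc]
  rw [ENNReal.toReal_ofReal (by nlinarith [Real.pi_pos])]
  ring

lemma integrable_of_bdd {f : ℝ → ℝ} (hf : AEStronglyMeasurable f (volume.restrict II))
    {C : ℝ} (h : ∀ x, |f x| ≤ C) : IntegrableOn f II :=
  ⟨hf, HasFiniteIntegral.of_bounded (C := C)
    (Filter.Eventually.of_forall (fun x => by simpa [Real.norm_eq_abs] using h x))⟩

/-- `F θ = ∫ g(θ, α) dα` over `(0, 2π]`. -/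
def F (r θ : ℝ) : ℝ := ∫ α in II, g r θ α

lemma F_meas (r : ℝ) : StronglyMeasurable (F r) :=
  StronglyMeasurable.integral_prod_right' (f := fun p : ℝ × ℝ => g r p.1 p.2)
    (meas_g2 r).stronglyMeasurable

lemma F_bdd (r θ : ℝ) : |F r θ| ≤ 2*π := by
  have h := norm_integral_le_of_norm_le_const (μ := volume.restrict II)
    (f := fun α => g r θ α) (C := 1)
    (Filter.Eventually.of_forall (fun α => by simpa [Real.norm_eq_abs] using g_abs r θ α))
  rw [measureReal_def, meas_univ_II, one_mul] at h
  simpa [F, Real.norm_eq_abs] using h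

lemma ae_ne {r : ℝ} (hr : r ∈ Set.Ico (0:ℝ) 1) (θ : ℝ) :
    ∀ᵐ α ∂(volume.restrict II), cfun r θ α ≠ 0 := by
  apply ae_restrict_of_ae
  rw [ae_iff]
  refine measure_mono_null (fun α hα => ?_)
    (null_trig_line (Real.cos θ - r) (- Real.sin θ) (- (r * Real.sin θ)) ?_)
  · simp only [Set.mem_setOf_eq, not_not] at hα
    simp only [Set.mem_setOf_eq]
    unfold cfun at hα
    linarith
  · by_cases hs : Real.sin θ = 0
    · left
      have h2 : Real.cos θ = 1 ∨ Real.cos θ = -1 := by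
        have hp := Real.sin_sq_add_cos_sq θ
        have hz : (Real.cos θ - 1) * (Real.cos θ + 1) = 0 := by nlinarith [hp, hs]
        rcases mul_eq_zero.mp hz with h | h
        · left; linarith
        · right; linarith
      rcases h2 with h | h <;> rw [h] <;> rcases hr with ⟨h0, h1⟩ <;> intro hc <;> linarith
    · right
      simpa using hs

lemma ae_ne' {r : ℝ} (hr : r ∈ Set.Ico (0:ℝ) 1) (α : ℝ) :
    ∀ᵐ γ ∂(volume.restrict II), cfun r γ α ≠ 0 := by
  filter_upwards [ae_ne hr α] with γ hγ
  rw [cfun_neg]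
  simpa using hγ

lemma Fneg {r : ℝ} (hr : r ∈ Set.Ico (0:ℝ) 1) (α : ℝ) :
    ∫ γ in II, g r γ α = - F r α := by
  rw [F, ← integral_neg]
  apply integral_congr_ae
  filter_upwards [ae_ne hr α] with γ hγ
  exact g_antisym hγ

lemma ind_eq {r α β γ : ℝ} (h1 : cfun r α β ≠ 0) (h2 : cfun r β γ ≠ 0)
    (h3 : cfun r γ α ≠ 0) :
    (if pt2 r 0 ∈ convexHull ℝ {circlePt α, circlePt β, circlePt γ} then (1:ℝ) else 0)
    = 4⁻¹ * (1 + g r α β * g r β γ + g r β γ * g r γ α + g r γ α * g r α β) := by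
  have e1 : cross2 (pt2 r 0) (circlePt β) (circlePt γ) = cfun r β γ := cross2_eq r β γ
  have e2 : cross2 (pt2 r 0) (circlePt γ) (circlePt α) = cfun r γ α := cross2_eq r γ α
  have e3 : cross2 (pt2 r 0) (circlePt α) (circlePt β) = cfun r α β := cross2_eq r α β
  rw [hull_iff_signs (by rw [e1]; exact h2) (by rw [e2]; exact h3) (by rw [e3]; exact h1),
    e1, e2, e3]
  unfold g
  rcases h1.lt_or_gt with s1 | s1 <;> rcases h2.lt_or_gt with s2 | s2 <;>
      rcases h3.lt_or_gt with s3 | s3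
  · rw [if_pos (Or.inr ⟨s2, s3, s1⟩), if_pos s1.le, if_pos s2.le, if_pos s3.le]; norm_num
  · rw [if_neg (by rintro (⟨a, b, c⟩ | ⟨a, b, c⟩) <;> linarith),
      if_pos s1.le, if_pos s2.le, if_neg (not_le.mpr s3)]; norm_num
  · rw [if_neg (by rintro (⟨a, b, c⟩ | ⟨a, b, c⟩) <;> linarith),
      if_pos s1.le, if_neg (not_le.mpr s2), if_pos s3.le]; norm_num
  · rw [if_neg (by rintro (⟨a, b, c⟩ | ⟨a, b, c⟩) <;> linarith),
      if_pos s1.le, if_neg (not_le.mpr s2), if_neg (not_le.mpr s3)]; norm_num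
  · rw [if_neg (by rintro (⟨a, b, c⟩ | ⟨a, b, c⟩) <;> linarith),
      if_neg (not_le.mpr s1), if_pos s2.le, if_pos s3.le]; norm_num
  · rw [if_neg (by rintro (⟨a, b, c⟩ | ⟨a, b, c⟩) <;> linarith),
      if_neg (not_le.mpr s1), if_pos s2.le, if_neg (not_le.mpr s3)]; norm_num
  · rw [if_neg (by rintro (⟨a, b, c⟩ | ⟨a, b, c⟩) <;> linarith),
      if_neg (not_le.mpr s1), if_neg (not_le.mpr s2), if_pos s3.le]; norm_num
  · rw [if_pos (Or.inl ⟨s2, s3, s1⟩), if_neg (not_le.mpr s1), if_neg (not_le.mpr s2),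
      if_neg (not_le.mpr s3)]; norm_num

lemma int_g_left (r θ : ℝ) : IntegrableOn (fun α => g r θ α) II :=
  integrable_of_bdd (meas_g_left r θ).aestronglyMeasurable (fun x => g_abs r θ x)

lemma int_g_right (r α : ℝ) : IntegrableOn (fun γ => g r γ α) II :=
  integrable_of_bdd (meas_g_right r α).aestronglyMeasurable (fun γ => g_abs r γ α)

lemma int_gg (r β α : ℝ) : IntegrableOn (fun γ => g r β γ * g r γ α) II :=
  integrable_of_bdd ((meas_g_left r β).mul (meas_g_right r α)).aestronglyMeasurable
    (C := 1) (fun γ => by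
      rw [abs_mul]
      nlinarith [g_abs r β γ, g_abs r γ α, abs_nonneg (g r β γ), abs_nonneg (g r γ α)])

lemma int_const_II (c : ℝ) : ∫ _ in II, c = 2*π*c := by
  rw [setIntegral_const, smul_eq_mul, II, measureReal_def, Real.volume_Ioc,
    ENNReal.toReal_ofReal (by nlinarith [Real.pi_pos])]
  ring

lemma int_bdd (f : ℝ → ℝ) {C : ℝ} (h : ∀ x, |f x| ≤ C) : |∫ x in II, f x| ≤ C * (2*π) := by
  have h2 := norm_integral_le_of_norm_le_const (μ := volume.restrict II) (f := f) (C := C)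
    (Filter.Eventually.of_forall (fun x => by simpa [Real.norm_eq_abs] using h x))
  rw [measureReal_def, meas_univ_II] at h2
  simpa [Real.norm_eq_abs] using h2

lemma stepA {r : ℝ} (hr : r ∈ Set.Ico (0:ℝ) 1) {α β : ℝ} (hab : cfun r α β ≠ 0) :
    (∫ γ in II, if pt2 r 0 ∈ convexHull ℝ {circlePt α, circlePt β, circlePt γ}
        then (1:ℝ) else 0)
    = 4⁻¹ * (2*π + g r α β * F r β + (∫ γ in II, g r β γ * g r γ α)
        - g r α β * F r α) := by
  have hcong : (∫ γ in II, if pt2 r 0 ∈ convexHull ℝ {circlePt α, circlePt β, circlePt γ}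
        then (1:ℝ) else 0)
      = ∫ γ in II, 4⁻¹ * (1 + g r α β * g r β γ + g r β γ * g r γ α
          + g r γ α * g r α β) := by
    apply integral_congr_ae
    filter_upwards [ae_ne hr β, ae_ne' hr α] with γ hbγ hγα
    exact ind_eq hab hbγ hγα
  rw [hcong, integral_const_mul]
  congr 1
  have i1 : IntegrableOn (fun _ : ℝ => (1:ℝ)) II := integrableOn_const (by
    rw [II, Real.volume_Ioc]; exact ENNReal.ofReal_ne_top)
  have i2 : IntegrableOn (fun γ => g r α β * g r β γ) II := (int_g_left r β).const_mul _
  have i3 := int_gg r β α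
  have i4 : IntegrableOn (fun γ => g r γ α * g r α β) II := (int_g_right r α).mul_const _
  have i12 : IntegrableOn (fun γ => (1:ℝ) + g r α β * g r β γ) II := i1.add i2
  have i123 : IntegrableOn (fun γ => (1:ℝ) + g r α β * g r β γ + g r β γ * g r γ α) II :=
    i12.add i3
  rw [integral_add i123 i4, integral_add i12 i3, integral_add i1 i2,
    integral_const_mul, integral_mul_const, int_const_II, Fneg hr α]
  have hF : (∫ γ in II, g r β γ) = F r β := rfl
  rw [hF]
  ring

lemma stepB {r : ℝ} (hr : r ∈ Set.Ico (0:ℝ) 1) (α : ℝ) :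
    (∫ β in II, ∫ γ in II, if pt2 r 0 ∈ convexHull ℝ {circlePt α, circlePt β, circlePt γ}
        then (1:ℝ) else 0)
    = 4⁻¹ * (2*π*(2*π) + (∫ β in II, g r α β * F r β)
        + (∫ β in II, ∫ γ in II, g r β γ * g r γ α) - F r α * F r α) := by
  have hcong : (∫ β in II, ∫ γ in II,
        if pt2 r 0 ∈ convexHull ℝ {circlePt α, circlePt β, circlePt γ} then (1:ℝ) else 0)
      = ∫ β in II, 4⁻¹ * (2*π + g r α β * F r β + (∫ γ in II, g r β γ * g r γ α)
          - g r α β * F r α) := by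
    apply integral_congr_ae
    filter_upwards [ae_ne hr α] with β hβ
    exact stepA hr hβ
  rw [hcong, integral_const_mul]
  congr 1
  have j1 : IntegrableOn (fun _ : ℝ => 2*π) II := integrableOn_const (by
    rw [II, Real.volume_Ioc]; exact ENNReal.ofReal_ne_top)
  have j2 : IntegrableOn (fun β => g r α β * F r β) II :=
    integrable_of_bdd ((meas_g_left r α).mul (F_meas r).measurable).aestronglyMeasurable
      (C := 1 * (2*π)) (fun β => by
        rw [abs_mul]
        exact mul_le_mul (g_abs r α β) (F_bdd r β) (abs_nonneg _) zero_le_one)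
  have j3 : IntegrableOn (fun β => ∫ γ in II, g r β γ * g r γ α) II := by
    apply integrable_of_bdd (C := 1 * (2*π))
    · exact (StronglyMeasurable.integral_prod_right'
        (f := fun p : ℝ × ℝ => g r p.1 p.2 * g r p.2 α)
        (((meas_g2 r).mul ((meas_g_right r α).comp measurable_snd)).stronglyMeasurable)
        ).aestronglyMeasurable
    · intro β
      apply int_bdd
      intro γ
      rw [abs_mul]
      nlinarith [g_abs r β γ, g_abs r γ α, abs_nonneg (g r β γ), abs_nonneg (g r γ α)]
  have j4 : IntegrableOn (fun β => g r α β * F r α) II := (int_g_left r α).mul_const _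
  have j12 : IntegrableOn (fun β => 2*π + g r α β * F r β) II := j1.add j2
  have j123 : IntegrableOn (fun β => 2*π + g r α β * F r β
      + (∫ γ in II, g r β γ * g r γ α)) II := j12.add j3
  rw [integral_sub j123 j4, integral_add j12 j3, integral_add j1 j2, int_const_II,
    integral_mul_const (F r α) (fun β => g r α β)]
  rw [show (∫ β in II, g r α β) = F r α from rfl]

lemma swapII (f : ℝ → ℝ → ℝ)
    (hm : AEStronglyMeasurable (fun p : ℝ × ℝ => f p.1 p.2)
      ((volume.restrict II).prod (volume.restrict II))) {C : ℝ} (hb : ∀ x y, |f x y| ≤ C) :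
    ∫ x in II, ∫ y in II, f x y = ∫ y in II, ∫ x in II, f x y := by
  apply integral_integral_swap
  refine ⟨(show AEStronglyMeasurable (Function.uncurry f) _ from hm),
    HasFiniteIntegral.of_bounded (C := C) (Filter.Eventually.of_forall
      (fun p => by rw [Real.norm_eq_abs]; exact hb p.1 p.2))⟩

lemma intM {r : ℝ} (hr : r ∈ Set.Ico (0:ℝ) 1) :
    (∫ α in II, ∫ β in II, g r α β * F r β) = - ∫ θ in II, F r θ * F r θ := by
  rw [swapII (fun α β => g r α β * F r β)
      (((meas_g2 r).mul ((F_meas r).measurable.comp measurable_snd)).aestronglyMeasurable)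
      (C := 2*π) (fun x y => by
        rw [abs_mul]
        nlinarith [g_abs r x y, F_bdd r y, abs_nonneg (g r x y), abs_nonneg (F r y)])]
  rw [← integral_neg]
  apply integral_congr_ae
  apply Filter.Eventually.of_forall
  intro β
  dsimp only
  rw [integral_mul_const (F r β) (fun α => g r α β), Fneg hr β]
  ring

lemma smP (r : ℝ) :
    StronglyMeasurable (fun p : ℝ × ℝ => ∫ γ in II, g r p.2 γ * g r γ p.1) := by
  apply StronglyMeasurable.integral_prod_right'
    (f := fun q : (ℝ × ℝ) × ℝ => g r q.1.2 q.2 * g r q.2 q.1.1)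
  exact (((meas_g2 r).comp ((measurable_fst.snd).prodMk measurable_snd)).mul
    ((meas_g2 r).comp (measurable_snd.prodMk measurable_fst.fst))).stronglyMeasurable

lemma intP {r : ℝ} (hr : r ∈ Set.Ico (0:ℝ) 1) :
    (∫ α in II, ∫ β in II, ∫ γ in II, g r β γ * g r γ α)
      = - ∫ θ in II, F r θ * F r θ := by
  rw [swapII (fun α β => ∫ γ in II, g r β γ * g r γ α)
      ((smP r).aestronglyMeasurable) (C := 1 * (2*π))
      (fun x y => int_bdd _ (fun γ => by
        rw [abs_mul]
        nlinarith [g_abs r y γ, g_abs r γ x, abs_nonneg (g r y γ), abs_nonneg (g r γ x)]))]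
  have hinner : ∀ β, (∫ α in II, ∫ γ in II, g r β γ * g r γ α)
      = ∫ x in II, g r β x * F r x := by
    intro β
    rw [swapII (fun α γ => g r β γ * g r γ α)
      ((((meas_g_left r β).comp measurable_snd).mul
        ((meas_g2 r).comp (measurable_snd.prodMk measurable_fst))).aestronglyMeasurable)
      (C := 1) (fun x y => by
        rw [abs_mul]
        nlinarith [g_abs r β y, g_abs r y x, abs_nonneg (g r β y), abs_nonneg (g r y x)])]
    apply integral_congr_ae
    apply Filter.Eventually.of_forall
    intro γ
    dsimp only
    rw [integral_const_mul]
    rfl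
  rw [integral_congr_ae (Filter.Eventually.of_forall hinner)]
  exact intM hr

lemma tripleInt {r : ℝ} (hr : r ∈ Set.Ico (0:ℝ) 1) :
    (∫ α in II, ∫ β in II, ∫ γ in II,
        if pt2 r 0 ∈ convexHull ℝ {circlePt α, circlePt β, circlePt γ} then (1:ℝ) else 0)
    = 4⁻¹ * ((2*π)^3 - 3 * ∫ θ in II, F r θ * F r θ) := by
  rw [integral_congr_ae (Filter.Eventually.of_forall (fun α => stepB hr α)),
    integral_const_mul]
  have k1 : IntegrableOn (fun _ : ℝ => 2*π*(2*π)) II := integrableOn_const (by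
    rw [II, Real.volume_Ioc]; exact ENNReal.ofReal_ne_top)
  have k2 : IntegrableOn (fun α => ∫ β in II, g r α β * F r β) II := by
    apply integrable_of_bdd (C := (2*π) * (2*π))
    · exact (StronglyMeasurable.integral_prod_right'
        (f := fun p : ℝ × ℝ => g r p.1 p.2 * F r p.2)
        (((meas_g2 r).mul ((F_meas r).measurable.comp measurable_snd)).stronglyMeasurable)
        ).aestronglyMeasurable
    · intro α
      apply int_bdd
      intro β
      rw [abs_mul]
      nlinarith [g_abs r α β, F_bdd r β, abs_nonneg (g r α β), abs_nonneg (F r β)]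
  have k3 : IntegrableOn (fun α => ∫ β in II, ∫ γ in II, g r β γ * g r γ α) II := by
    apply integrable_of_bdd (C := (1 * (2*π)) * (2*π))
    · exact (StronglyMeasurable.integral_prod_right'
        (f := fun p : ℝ × ℝ => ∫ γ in II, g r p.2 γ * g r γ p.1) (smP r)).aestronglyMeasurable
    · intro α
      apply int_bdd
      intro β
      apply int_bdd
      intro γ
      rw [abs_mul]
      nlinarith [g_abs r β γ, g_abs r γ α, abs_nonneg (g r β γ), abs_nonneg (g r γ α)]
  have k4 : IntegrableOn (fun α => F r α * F r α) II := by
    apply integrable_of_bdd (C := (2*π) * (2*π))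
    · exact ((F_meas r).measurable.mul (F_meas r).measurable).aestronglyMeasurable
    · intro α
      rw [abs_mul]
      nlinarith [F_bdd r α, abs_nonneg (F r α)]
  have k12 : IntegrableOn (fun α => 2*π*(2*π) + ∫ β in II, g r α β * F r β) II := k1.add k2
  have k123 : IntegrableOn (fun α => 2*π*(2*π) + (∫ β in II, g r α β * F r β)
      + ∫ β in II, ∫ γ in II, g r β γ * g r γ α) II := k12.add k3
  rw [integral_sub k123 k4, integral_add k12 k3, integral_add k1 k2, int_const_II,
    intM hr, intP hr]
  ring

end TP

end Aux


theorem prob_eq_quarter_sub_integral_sq (r : ℝ) (hr : r ∈ Set.Ico (0:ℝ) 1) :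
    (2*π)⁻¹^3 * (∫ α in (0:ℝ)..(2*π), ∫ β in (0:ℝ)..(2*π), ∫ γ in (0:ℝ)..(2*π),
      if pt2 r 0 ∈ convexHull ℝ {circlePt α, circlePt β, circlePt γ} then (1:ℝ) else 0)
    = 1/4 - 3/4 * ((2*π)⁻¹ * ∫ θ in (0:ℝ)..(2*π),
        ((2*π)⁻¹ * ∫ α in (0:ℝ)..(2*π), Rside (circlePt α) (pt2 r 0) (circlePt θ))^2) := by
  have h2π : (0:ℝ) ≤ 2*π := by positivity
  have hIoc : Set.Ioc (0:ℝ) (2*π) = II := rfl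
  simp only [intervalIntegral.integral_of_le h2π, hIoc, Rside_eq]
  rw [tripleInt hr]
  have hFdef : ∀ θ : ℝ, (∫ α in II, g r θ α) = F r θ := fun θ => rfl
  simp only [hFdef]
  rw [show (fun θ => ((2*π)⁻¹ * F r θ)^2) = fun θ => (2*π)⁻¹^2 * (F r θ * F r θ) from
    funext (fun θ => by ring), MeasureTheory.integral_const_mul]
  have hπ : (π:ℝ) ≠ 0 := Real.pi_ne_zero
  field_simp
end

section
/- Let r ∈ [0, 1), X = (r, 0) ∈ ℝ², θ ∈ [0, 2π) with A(θ) = (cos θ, sin θ) ≠ X. Define cross(P, Q, Y) = (Q − P)₁·(Y − P)₂ − (Q − P)₂·(Y − P)₁ and R(Y, →PQ) = 1 if cross(P, Q, Y) ≤ 0, −1 otherwise. Then | (1/(2π)) ∫₀^{2π} R(A(α), →X A(θ)) dα | = (2/π) · |Complex.arg(1 − r·exp(iθ))|. (The normalized difference of the two arcs into which the line through X and A(θ) cuts the unit circle equals (2/π) times the angle between the vectors from the origin to A(θ) and from X to A(θ).) -/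
set_option maxHeartbeats 800000


open Real
open scoped Classical

theorem abs_integral_Rside_eq_arg (r : ℝ) (hr : r ∈ Set.Ico (0:ℝ) 1)
    (θ : ℝ) (hθ : θ ∈ Set.Ico (0:ℝ) (2*π)) (hne : circlePt θ ≠ pt2 r 0) :
    |(2*π)⁻¹ * ∫ α in (0:ℝ)..(2*π), Rside (circlePt α) (pt2 r 0) (circlePt θ)|
      = (2/π) * |Complex.arg (1 - (r:ℂ) * Complex.exp (θ * Complex.I))| := by
  obtain ⟨hr0, hr1⟩ := hr
  have hπ : (0:ℝ) < π := Real.pi_pos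
  set A : ℝ := 1 - r * Real.cos θ with hA
  set B : ℝ := r * Real.sin θ with hB
  have hApos : 0 < A := by
    have h1 : r * Real.cos θ ≤ r := by nlinarith [Real.cos_le_one θ]
    simp only [hA]; linarith
  set z : ℂ := ⟨A, B⟩ with hz
  have hzre : z.re = A := rfl
  have hzim : z.im = B := rfl
  have hzne : z ≠ 0 := by
    intro h
    have : z.re = 0 := by rw [h]; simp
    rw [hzre] at this; linarith
  set φ : ℝ := Complex.arg z with hφ
  have hφlt : |φ| < π/2 := Complex.abs_arg_lt_pi_div_two_iff.mpr (Or.inl hApos)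
  obtain ⟨hφ1, hφ2⟩ := abs_lt.mp hφlt
  set ρ : ℝ := ‖z‖ with hρ
  have hρpos : 0 < ρ := norm_pos_iff.mpr hzne
  have hcosφ : Real.cos φ = A / ρ := by rw [hφ, Complex.cos_arg hzne, hzre]
  have hsinφ : Real.sin φ = B / ρ := by rw [hφ, Complex.sin_arg, hzim]
  -- arg of 1 - r exp(θ I)
  have hconj : 1 - (r:ℂ) * Complex.exp (θ * Complex.I) = (starRingEnd ℂ) z := by
    apply Complex.ext
    · simp [Complex.exp_ofReal_mul_I_re, hzre, hA]
    · simp [Complex.exp_ofReal_mul_I_im, hzim, hB]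
  have harg : Complex.arg (1 - (r:ℂ) * Complex.exp (θ * Complex.I)) = -φ := by
    rw [hconj, Complex.arg_conj]
    have hne' : Complex.arg z ≠ π := by
      intro h; rw [← hφ] at *; rw [h] at hφ2; linarith
    simp [hne', hφ]
  -- the half-angle step function
  set h : ℝ → ℝ := fun t => if Real.sin t * Real.cos (t - φ) ≤ 0 then (1:ℝ) else -1 with hh
  have hcombine : ∀ t : ℝ, A * Real.cos t + B * Real.sin t = ρ * Real.cos (t - φ) := by
    intro t
    rw [Real.cos_sub, hcosφ, hsinφ]
    field_simp
  have hRside : ∀ α : ℝ, Rside (circlePt α) (pt2 r 0) (circlePt θ) = h ((α - θ)/2) := by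
    intro α
    have hα : α = θ + 2 * ((α - θ)/2) := by ring
    set t := (α - θ)/2 with ht
    have hcross : cross2 (pt2 r 0) (circlePt θ) (circlePt α)
        = 2 * ρ * (Real.sin t * Real.cos (t - φ)) := by
      have h1 : cross2 (pt2 r 0) (circlePt θ) (circlePt α)
          = (Real.cos θ - r) * Real.sin α - Real.sin θ * (Real.cos α - r) := by
        simp [cross2, pt2, circlePt, PiLp.sub_apply]
      rw [h1, hα]
      have h2 : (Real.cos θ - r) * Real.sin (θ + 2*t) - Real.sin θ * (Real.cos (θ + 2*t) - r)
          = 2 * Real.sin t * (A * Real.cos t + B * Real.sin t) := by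
        rw [Real.sin_add, Real.cos_add, Real.sin_two_mul, Real.cos_two_mul, hA, hB]
        linear_combination (2 * Real.sin t * Real.cos t) * Real.sin_sq_add_cos_sq θ
          - (2*r*Real.sin θ) * Real.sin_sq_add_cos_sq t
      rw [h2, hcombine t]; ring
    have hiff : cross2 (pt2 r 0) (circlePt θ) (circlePt α) ≤ 0
        ↔ Real.sin t * Real.cos (t - φ) ≤ 0 := by
      rw [hcross]
      constructor <;> intro hle <;> nlinarith
    simp only [Rside, hh]
    by_cases hcase : Real.sin t * Real.cos (t - φ) ≤ 0
    · rw [if_pos (hiff.mpr hcase), if_pos hcase]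
    · rw [if_neg (fun hc => hcase (hiff.mp hc)), if_neg hcase]
  -- rewrite the integral
  have hint1 : (∫ α in (0:ℝ)..(2*π), Rside (circlePt α) (pt2 r 0) (circlePt θ))
      = ∫ α in (0:ℝ)..(2*π), h ((α - θ)/2) := by
    apply intervalIntegral.integral_congr
    intro α _
    exact hRside α
  have hper : Function.Periodic (fun α => h ((α - θ)/2)) (2*π) := by
    intro α
    simp only [hh]
    have e1 : (α + 2*π - θ)/2 = ((α - θ)/2 + π) := by ring
    have e2 : (α - θ)/2 + π - φ = ((α - θ)/2 - φ) + π := by ring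
    rw [e1, Real.sin_add_pi, e2, Real.cos_add_pi, neg_mul_neg]
  have hshift : (∫ α in (0:ℝ)..(2*π), h ((α - θ)/2))
      = ∫ α in θ..(θ + 2*π), h ((α - θ)/2) := by
    have := hper.intervalIntegral_add_eq 0 θ
    simpa using this
  have hsub : (∫ α in θ..(θ + 2*π), h ((α - θ)/2)) = 2 * ∫ t in (0:ℝ)..π, h t := by
    have h1 : (∫ α in θ..(θ + 2*π), h ((α - θ)/2))
        = ∫ α in θ..(θ + 2*π), h ((1/2) * α + (-θ/2)) := by
      apply intervalIntegral.integral_congr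
      intro α _
      show h ((α - θ)/2) = h ((1/2:ℝ) * α + (-θ/2))
      have e : (α - θ)/2 = (1/2:ℝ) * α + (-θ/2) := by ring
      rw [e]
    rw [h1, intervalIntegral.integral_comp_mul_add h (by norm_num : (1/2:ℝ) ≠ 0) (-θ/2)]
    have e1 : (1/2:ℝ) * θ + -θ/2 = 0 := by ring
    have e2 : (1/2:ℝ) * (θ + 2*π) + -θ/2 = π := by ring
    rw [e1, e2]
    simp [smul_eq_mul]
  -- measurability / integrability of h
  have hmeas : Measurable h := by
    apply Measurable.ite _ measurable_const measurable_const
    exact measurableSet_le (by fun_prop) measurable_const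
  have hinteg : ∀ a b : ℝ, IntervalIntegrable h MeasureTheory.volume a b := by
    intro a b
    rw [intervalIntegrable_iff]
    apply MeasureTheory.Measure.integrableOn_of_bounded (M := 1)
    · exact measure_Ioc_lt_top.ne
    · exact hmeas.aestronglyMeasurable
    · filter_upwards with t
      simp only [hh]
      split <;> simp
  set c : ℝ := φ + π/2 with hc
  have hc0 : 0 < c := by simp only [hc]; linarith
  have hcπ : c < π := by simp only [hc]; linarith
  have hI1 : (∫ t in (0:ℝ)..c, h t) = -c := by
    have hcong : (∫ t in (0:ℝ)..c, h t) = ∫ t in (0:ℝ)..c, (-1:ℝ) := by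
      apply intervalIntegral.integral_congr_ae
      have hane : ∀ᵐ t : ℝ, t ≠ c := by
        rw [MeasureTheory.ae_iff]
        simpa using MeasureTheory.measure_singleton (α := ℝ) c
      filter_upwards [hane] with t htne hmem
      rw [Set.uIoc_of_le hc0.le] at hmem
      have ht1 : 0 < t := hmem.1
      have ht2 : t < c := lt_of_le_of_ne hmem.2 htne
      have hs : 0 < Real.sin t := Real.sin_pos_of_pos_of_lt_pi ht1 (lt_trans ht2 hcπ)
      have hco : 0 < Real.cos (t - φ) := by
        apply Real.cos_pos_of_mem_Ioo
        constructor
        · simp only [hc] at ht2 ⊢; linarith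
        · simp only [hc] at ht2 ⊢; linarith
      simp only [hh]
      rw [if_neg (not_le.mpr (mul_pos hs hco))]
    rw [hcong]
    simp
  have hI2 : (∫ t in c..π, h t) = π - c := by
    have hcong : (∫ t in c..π, h t) = ∫ t in c..π, (1:ℝ) := by
      apply intervalIntegral.integral_congr
      intro t hmem
      rw [Set.uIcc_of_le hcπ.le] at hmem
      have hs : 0 ≤ Real.sin t :=
        Real.sin_nonneg_of_nonneg_of_le_pi (le_trans hc0.le hmem.1) hmem.2
      have hco : Real.cos (t - φ) ≤ 0 := by
        apply Real.cos_nonpos_of_pi_div_two_le_of_le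
        · simp only [hc] at hmem; linarith [hmem.1]
        · linarith [hmem.2]
      simp only [hh]
      rw [if_pos (mul_nonpos_of_nonneg_of_nonpos hs hco)]
    rw [hcong]
    simp
  have hItot : (∫ t in (0:ℝ)..π, h t) = -2*φ := by
    rw [← intervalIntegral.integral_add_adjacent_intervals (hinteg 0 c) (hinteg c π), hI1, hI2]
    simp only [hc]; ring
  rw [hint1, hshift, hsub, hItot, harg]
  rw [abs_neg]
  rw [abs_mul, abs_mul]
  rw [abs_of_pos (inv_pos.mpr (by linarith : (0:ℝ) < 2*π))]
  rw [abs_mul, abs_neg]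
  have : |(2:ℝ)| = 2 := by norm_num
  rw [this]
  field_simp
end
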